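/- Let Y, Z be smooth subvarieties of a smooth variety X intersecting transversally, meaning that at every point p there is a regular system of parameters f_1,...,f_d of O_{X,p} with I_Y = (f_1,...,f_{k_1}) and I_Z = (f_{k_1+1},...,f_{k_2}) locally at p. Then under the blow-up Bl_Z X → X, the strict transform of Y equals the total transform of Y. -/

import Mathlib

/-!
STATEMENT 7 (Lemma 2.31): let `Y, Z` be smooth subvarieties of a smooth
variety `X` intersecting transversally: at every point `p` there is a regular
system of parameters `f_1, …, f_d` of `R = 𝒪_{X,p}` with
`I_Y = (f_1, …, f_{k₁})` and `I_Z = (f_{k₁+1}, …, f_{k₂})` locally at `p`.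
Then under `Bl_Z X → X` the strict transform of `Y` equals its total
transform.

We formalize the statement in its local-algebraic form at a point: `R` is the
local ring `𝒪_{X,p}` of a smooth variety over an algebraically closed field of
characteristic zero, `f` is a regular system of parameters, and on each chart
of the blow-up of `I_Z` — the chart at the generator `f_b`, namely
`R[x_a : a]/(f_a - x_a f_b)` — the total transform `I_Y · 𝒪` of `Y` equals the
strict transform, i.e. the saturation of `I_Y · 𝒪` at `f_b`: every element `x`
with `f_b^m x ∈ I_Y · 𝒪` already lies in `I_Y · 𝒪`.
-/

open MvPolynomial

/-- Index set of the chart variables: the generators of `I_Z` other than the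
chart generator `f_b`. -/
abbrev chartIdx (d k1 k2 : ℕ) (b : Fin d) :=
  {a : Fin d // k1 ≤ (a : ℕ) ∧ (a : ℕ) < k2 ∧ a ≠ b}

/-- The relations `f_a - x_a f_b` defining the blow-up chart at `f_b`. -/
noncomputable abbrev relIdeal (R : Type*) [CommRing R] (d k1 k2 : ℕ)
    (f : Fin d → R) (b : Fin d) :
    Ideal (MvPolynomial (chartIdx d k1 k2 b) R) :=
  Ideal.span (Set.range fun a : chartIdx d k1 k2 b =>
    (C (f a.1) - X a * C (f b) : MvPolynomial (chartIdx d k1 k2 b) R))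

/-- The blow-up chart `R[x_a]/(f_a - x_a f_b)`. -/
abbrev BlChart (R : Type*) [CommRing R] (d k1 k2 : ℕ) (f : Fin d → R) (b : Fin d) :=
  MvPolynomial (chartIdx d k1 k2 b) R ⧸ relIdeal R d k1 k2 f b

/-- The canonical map `R → R[x_a]/(f_a - x_a f_b)`. -/
noncomputable abbrev chartMap (R : Type*) [CommRing R] (d k1 k2 : ℕ)
    (f : Fin d → R) (b : Fin d) : R →+* BlChart R d k1 k2 f b :=
  (Ideal.Quotient.mk (relIdeal R d k1 k2 f b)).comp
    (C : R →+* MvPolynomial (chartIdx d k1 k2 b) R)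

namespace Stmt7Aux

open Ideal RingTheory.Sequence

variable {R : Type*} [CommRing R]

lemma smulRegQuot_iff (p : Submodule R R) (z : R) :
    IsSMulRegular (R ⧸ p) z ↔ ∀ x : R, z * x ∈ p → x ∈ p := by
  constructor
  · intro h x hx
    have h0 : z • (Submodule.Quotient.mk x : R ⧸ p) = z • (0 : R ⧸ p) := by
      rw [smul_zero, ← Submodule.Quotient.mk_smul, smul_eq_mul]
      exact (Submodule.Quotient.mk_eq_zero p).2 hx
    exact (Submodule.Quotient.mk_eq_zero p).1 (h h0)
  · intro h a c hac
    obtain ⟨u, rfl⟩ := Submodule.Quotient.mk_surjective p a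
    obtain ⟨v, rfl⟩ := Submodule.Quotient.mk_surjective p c
    simp only [← Submodule.Quotient.mk_smul, smul_eq_mul, Submodule.Quotient.eq] at hac
    rw [Submodule.Quotient.eq]
    exact h (u - v) (by rwa [mul_sub])

lemma smul_top_self (I : Ideal R) : I • (⊤ : Submodule R R) = I := by
  rw [smul_eq_mul, Ideal.mul_top]

lemma smulRegQuotIdeal_iff (I : Ideal R) (z : R) :
    IsSMulRegular (R ⧸ (I • ⊤ : Submodule R R)) z ↔ ∀ x : R, z * x ∈ I → x ∈ I := by
  rw [smul_top_self]
  exact smulRegQuot_iff I z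

lemma mem_take_finRange {n m : ℕ} (j : Fin n) :
    j ∈ (List.finRange n).take m ↔ (j : ℕ) < m := by
  rw [List.mem_iff_getElem]
  constructor
  · rintro ⟨i, hi, rfl⟩
    simp only [List.getElem_take, List.getElem_finRange]
    simp only [List.length_take, List.length_finRange, lt_min_iff] at hi
    simpa using hi.1
  · intro hj
    refine ⟨(j : ℕ), ?_, ?_⟩
    · simp only [List.length_take, List.length_finRange, lt_min_iff]
      exact ⟨hj, j.2⟩
    · simp [List.getElem_take, List.getElem_finRange]

/-- Any element of the regular system of parameters is a nonzerodivisor modulo the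
ideal generated by any other subcollection (with all indices `< k2`). -/
lemma regSub [IsLocalRing R] [IsNoetherianRing R]
    {d k2 : ℕ} (h2d : k2 ≤ d) (f : Fin d → R)
    (hmax : Ideal.span (Set.range f) = IsLocalRing.maximalIdeal R)
    (hreg : ∀ (i : Fin d) (x : R),
        f i * x ∈ Ideal.span (f '' {j : Fin d | (j : ℕ) < (i : ℕ)}) →
        x ∈ Ideal.span (f '' {j : Fin d | (j : ℕ) < (i : ℕ)}))
    (t : Finset (Fin d)) (ht : ∀ j ∈ t, (j : ℕ) < k2)
    (c : Fin d) (hc : (c : ℕ) < k2) (hct : c ∉ t) :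
    ∀ x : R, f c * x ∈ Ideal.span (f '' ↑t) → x ∈ Ideal.span (f '' ↑t) := by
  classical
  set L0 : List (Fin d) := (List.finRange d).take k2 with hL0
  have hW0 : IsWeaklyRegular R (L0.map f) := by
    rw [isWeaklyRegular_iff]
    intro i hi
    have hlen : (L0.map f).length = k2 := by
      simp only [hL0, List.length_map, List.length_take, List.length_finRange]
      omega
    have hik2 : i < k2 := hlen ▸ hi
    have hid : i < d := lt_of_lt_of_le hik2 h2d
    have hel : (L0.map f)[i] = f ⟨i, hid⟩ := by
      simp [hL0, List.getElem_take, List.getElem_finRange]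
    have hpre : Ideal.ofList ((L0.map f).take i) =
        Ideal.span (f '' {j : Fin d | (j : ℕ) < i}) := by
      apply congrArg Ideal.span
      ext x
      simp only [Set.mem_setOf_eq, ← List.map_take, List.mem_map, Set.mem_image]
      constructor
      · rintro ⟨j, hj, rfl⟩
        have : j ∈ (List.finRange d).take (min i k2) := by rwa [← List.take_take, ← hL0]
        rw [mem_take_finRange] at this
        exact ⟨j, by omega, rfl⟩
      · rintro ⟨j, hj, rfl⟩
        refine ⟨j, ?_, rfl⟩
        have : j ∈ (List.finRange d).take (min i k2) := by
          rw [mem_take_finRange]; omega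
        rwa [← List.take_take, ← hL0] at this
    rw [hel, hpre]
    rw [smulRegQuotIdeal_iff]
    intro x hx
    exact hreg ⟨i, hid⟩ x hx
  set u : Finset (Fin d) := Finset.univ.filter (fun j => (j : ℕ) < k2) with hu
  set t' : Finset (Fin d) := u \ insert c t with ht'
  set L1 : List (Fin d) := t.sort (· ≤ ·) ++ c :: t'.sort (· ≤ ·) with hL1
  have nodup0 : L0.Nodup := (List.take_sublist _ _).nodup (List.nodup_finRange d)
  have nodup1 : L1.Nodup := by
    rw [hL1, List.nodup_append]
    refine ⟨Finset.sort_nodup _ _, ?_, ?_⟩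
    · rw [List.nodup_cons]
      refine ⟨fun hcm => ?_, Finset.sort_nodup _ _⟩
      rw [Finset.mem_sort, ht', Finset.mem_sdiff] at hcm
      exact hcm.2 (Finset.mem_insert_self c t)
    · intro a ha a' hmem haa'
      subst haa'
      rw [Finset.mem_sort] at ha
      rcases List.mem_cons.1 hmem with rfl | h'
      · exact hct ha
      · rw [Finset.mem_sort, ht', Finset.mem_sdiff] at h'
        exact h'.2 (Finset.mem_insert_of_mem ha)
  have htf : L0.toFinset = L1.toFinset := by
    ext j
    simp only [List.mem_toFinset, hL1, List.mem_append, List.mem_cons, Finset.mem_sort,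
      mem_take_finRange, ht', Finset.mem_sdiff, hu, Finset.mem_filter, Finset.mem_univ,
      true_and, Finset.mem_insert, hL0]
    constructor
    · intro h
      by_cases hjc : j = c
      · tauto
      · by_cases hjt : j ∈ t
        · tauto
        · exact Or.inr (Or.inr ⟨h, by tauto⟩)
    · rintro (h | h | h)
      · exact ht j h
      · subst h; exact hc
      · exact h.1
  have hperm : L0.Perm L1 := List.perm_of_nodup_nodup_toFinset_eq nodup0 nodup1 htf
  have hW1 : IsWeaklyRegular R (L1.map f) := by
    refine IsLocalRing.isWeaklyRegular_of_perm_of_subset_maximalIdeal hW0 (hperm.map f) ?_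
    rintro r hr
    obtain ⟨j, _, rfl⟩ := List.mem_map.1 hr
    rw [← hmax]
    exact Ideal.subset_span ⟨j, rfl⟩
  have hsplit : L1.map f = (t.sort (· ≤ ·)).map f ++ (f c :: (t'.sort (· ≤ ·)).map f) := by
    simp [hL1]
  rw [hsplit, isWeaklyRegular_append_iff] at hW1
  have h2 := hW1.2
  rw [isWeaklyRegular_cons_iff] at h2
  have hcreg := h2.1
  have hid' : Ideal.ofList ((t.sort (· ≤ ·)).map f) = Ideal.span (f '' ↑t) := by
    apply congrArg Ideal.span
    ext x
    simp only [Set.mem_setOf_eq, List.mem_map, Finset.mem_sort, Set.mem_image,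
      Finset.mem_coe]
  rw [hid'] at hcreg
  rw [smulRegQuotIdeal_iff] at hcreg
  exact hcreg

lemma mapC_colon {σ : Type*} (I : Ideal R) (z : R)
    (h : ∀ x, z * x ∈ I → x ∈ I) (p : MvPolynomial σ R)
    (hp : C z * p ∈ I.map (C : R →+* MvPolynomial σ R)) :
    p ∈ I.map (C : R →+* MvPolynomial σ R) := by
  rw [MvPolynomial.mem_map_C_iff] at hp ⊢
  intro m
  have := hp m
  rw [coeff_C_mul] at this
  exact h _ this

variable {d k1 k2 : ℕ} {b : Fin d} (f : Fin d → R)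

/-- The relation polynomial `f_a - x_a f_b`. -/
noncomputable def rl (a : chartIdx d k1 k2 b) : MvPolynomial (chartIdx d k1 k2 b) R :=
  C (f a.1) - X a * C (f b)

/-- The index set at stage `s` of the induction: the generators of `I_Y`, the chart
generator `f_b`, and the generators indexed by `s`. -/
def US (s : Finset (chartIdx d k1 k2 b)) : Set (Fin d) :=
  {j : Fin d | (j : ℕ) < k1} ∪ {b} ∪ (Subtype.val '' (s : Set (chartIdx d k1 k2 b)))

lemma sup_singleton_eq (s : Finset (chartIdx d k1 k2 b)) :
    ((Ideal.span (f '' {j : Fin d | (j : ℕ) < k1})).map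
        (C : R →+* MvPolynomial (chartIdx d k1 k2 b) R) ⊔
      Ideal.span (rl f '' ↑s)) ⊔ Ideal.span {C (f b)} =
    (Ideal.span (f '' US (b := b) s)).map (C : R →+* MvPolynomial (chartIdx d k1 k2 b) R) := by
  apply le_antisymm
  · rw [sup_le_iff, sup_le_iff]
    refine ⟨⟨?_, ?_⟩, ?_⟩
    · exact Ideal.map_mono (Ideal.span_mono (Set.image_mono (by
        intro j hj; exact Or.inl (Or.inl hj))))
    · rw [Ideal.span_le]
      rintro _ ⟨a, ha, rfl⟩
      have h1 : (C (f a.1) : MvPolynomial (chartIdx d k1 k2 b) R) ∈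
          (Ideal.span (f '' US (b := b) s)).map C :=
        Ideal.mem_map_of_mem _ (Ideal.subset_span ⟨a.1, Or.inr ⟨a, ha, rfl⟩, rfl⟩)
      have h2 : (C (f b) : MvPolynomial (chartIdx d k1 k2 b) R) ∈
          (Ideal.span (f '' US (b := b) s)).map C :=
        Ideal.mem_map_of_mem _ (Ideal.subset_span ⟨b, Or.inl (Or.inr rfl), rfl⟩)
      exact sub_mem h1 (Ideal.mul_mem_left _ _ h2)
    · rw [Ideal.span_le, Set.singleton_subset_iff]
      exact Ideal.mem_map_of_mem _ (Ideal.subset_span ⟨b, Or.inl (Or.inr rfl), rfl⟩)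
  · rw [Ideal.map_span, Ideal.span_le]
    rintro _ ⟨_, ⟨j, hj, rfl⟩, rfl⟩
    rcases hj with (hj | hj) | hj
    · exact Submodule.mem_sup_left (Submodule.mem_sup_left
        (Ideal.mem_map_of_mem _ (Ideal.subset_span ⟨j, hj, rfl⟩)))
    · rcases hj with rfl
      exact Submodule.mem_sup_right (Ideal.subset_span rfl)
    · obtain ⟨a, ha, rfl⟩ := hj
      have h1 : (C (f a.1) : MvPolynomial (chartIdx d k1 k2 b) R)
          = rl f a + X a * C (f b) := by rw [rl]; ring
      rw [h1]
      refine add_mem (Submodule.mem_sup_left (Submodule.mem_sup_right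
        (Ideal.subset_span ⟨a, ha, rfl⟩))) (Submodule.mem_sup_right ?_)
      exact Ideal.mul_mem_left _ _ (Ideal.subset_span rfl)

/-- The main induction: the total transform ideal, on each partial stage `s`,
is saturated at `f_b`. -/
lemma mainInd
    (hg : ∀ x : R, f b * x ∈ Ideal.span (f '' {j : Fin d | (j : ℕ) < k1}) →
        x ∈ Ideal.span (f '' {j : Fin d | (j : ℕ) < k1}))
    (he : ∀ (s : Finset (chartIdx d k1 k2 b)) (a : chartIdx d k1 k2 b), a ∉ s →
        ∀ x : R, f a.1 * x ∈ Ideal.span (f '' US (b := b) s) →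
          x ∈ Ideal.span (f '' US (b := b) s)) :
    ∀ (s : Finset (chartIdx d k1 k2 b)) (p : MvPolynomial (chartIdx d k1 k2 b) R),
      C (f b) * p ∈ (Ideal.span (f '' {j : Fin d | (j : ℕ) < k1})).map
          (C : R →+* MvPolynomial (chartIdx d k1 k2 b) R) ⊔ Ideal.span (rl f '' ↑s) →
      p ∈ (Ideal.span (f '' {j : Fin d | (j : ℕ) < k1})).map
          (C : R →+* MvPolynomial (chartIdx d k1 k2 b) R) ⊔ Ideal.span (rl f '' ↑s) := by
  classical
  intro s
  induction s using Finset.induction_on with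
  | empty =>
    intro p hp
    simp only [Finset.coe_empty, Set.image_empty, Ideal.span_empty, sup_bot_eq] at hp ⊢
    exact mapC_colon _ _ hg p hp
  | @insert a s ha ih =>
    intro p hp
    have hins : ((Ideal.span (f '' {j : Fin d | (j : ℕ) < k1})).map
          (C : R →+* MvPolynomial (chartIdx d k1 k2 b) R) ⊔
        Ideal.span (rl f '' ↑(insert a s))) =
        ((Ideal.span (f '' {j : Fin d | (j : ℕ) < k1})).map
          (C : R →+* MvPolynomial (chartIdx d k1 k2 b) R) ⊔
          Ideal.span (rl f '' ↑s)) ⊔ Ideal.span {rl f a} := by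
      rw [Finset.coe_insert, Set.image_insert_eq, Ideal.span_insert, ← sup_assoc,
        sup_right_comm, sup_assoc]
    rw [hins] at hp ⊢
    set M0 := (Ideal.span (f '' {j : Fin d | (j : ℕ) < k1})).map
        (C : R →+* MvPolynomial (chartIdx d k1 k2 b) R) ⊔ Ideal.span (rl f '' ↑s) with hM0
    obtain ⟨j, hj, w, hw, heq⟩ := Submodule.mem_sup.1 hp
    obtain ⟨q, rfl⟩ := Ideal.mem_span_singleton'.1 hw
    have hq2 : C (f a.1) * q ∈ M0 ⊔ Ideal.span {C (f b)} := by
      have hcalc : C (f a.1) * q = (C (f b) * p - j) + X a * (C (f b) * q) := by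
        rw [← heq]; simp only [rl]; ring
      rw [hcalc]
      refine add_mem (sub_mem ?_ (Submodule.mem_sup_left hj)) ?_
      · exact Submodule.mem_sup_right (Ideal.mem_span_singleton.2 ⟨p, rfl⟩)
      · exact Submodule.mem_sup_right (Ideal.mem_span_singleton.2
          ⟨X a * q, by ring⟩)
    rw [hM0, sup_singleton_eq] at hq2
    have hq3 := mapC_colon _ _ (he s a ha) q hq2
    rw [← sup_singleton_eq, ← hM0] at hq3
    obtain ⟨j', hj', w', hw', heq'⟩ := Submodule.mem_sup.1 hq3
    obtain ⟨q', rfl⟩ := Ideal.mem_span_singleton'.1 hw'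
    have hstep : C (f b) * (p - q' * rl f a) ∈ M0 := by
      have h5 : C (f b) * (p - q' * rl f a) = j + j' * rl f a := by
        linear_combination -heq - rl f a * heq'
      rw [h5]
      exact add_mem hj (Ideal.mul_mem_right _ _ hj')
    have h6 := ih (p - q' * rl f a) hstep
    have h7 : p = (p - q' * rl f a) + q' * rl f a := by ring
    rw [h7]
    exact add_mem (Submodule.mem_sup_left h6)
      (Submodule.mem_sup_right (Ideal.mem_span_singleton.2 ⟨q', by ring⟩))

end Stmt7Aux

theorem stmt7 (k R : Type*) [Field k] [IsAlgClosed k] [CharZero k]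
    [CommRing R] [IsLocalRing R] [IsNoetherianRing R] [Algebra k R]
    (d k1 k2 : ℕ) (h12 : k1 ≤ k2) (h2d : k2 ≤ d)
    (f : Fin d → R)
    -- `f_1, …, f_d` generate the maximal ideal of `R = 𝒪_{X,p}` …
    (hmax : Ideal.span (Set.range f) = IsLocalRing.maximalIdeal R)
    -- … and form a regular sequence
    (hreg : ∀ (i : Fin d) (x : R),
        f i * x ∈ Ideal.span (f '' {j : Fin d | (j : ℕ) < (i : ℕ)}) →
        x ∈ Ideal.span (f '' {j : Fin d | (j : ℕ) < (i : ℕ)}))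
    -- chart of the blow-up of `I_Z = (f_{k₁+1}, …, f_{k₂})` at `f_b`
    (b : Fin d) (hb1 : k1 ≤ (b : ℕ)) (hb2 : (b : ℕ) < k2) :
    -- the total transform of `I_Y = (f_1, …, f_{k₁})` is saturated at `f_b`,
    -- i.e. it equals the strict transform of `Y`
    ∀ (x : BlChart R d k1 k2 f b) (m : ℕ),
      chartMap R d k1 k2 f b (f b) ^ m * x ∈
          (Ideal.span (f '' {j : Fin d | (j : ℕ) < k1})).map (chartMap R d k1 k2 f b) →
      x ∈ (Ideal.span (f '' {j : Fin d | (j : ℕ) < k1})).map (chartMap R d k1 k2 f b) := by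
  classical
  have hg : ∀ x : R, f b * x ∈ Ideal.span (f '' {j : Fin d | (j : ℕ) < k1}) →
      x ∈ Ideal.span (f '' {j : Fin d | (j : ℕ) < k1}) := by
    have hcoe : (↑(Finset.univ.filter (fun j : Fin d => (j : ℕ) < k1)) : Set (Fin d)) =
        {j : Fin d | (j : ℕ) < k1} := by ext j; simp
    intro x hx
    have := Stmt7Aux.regSub h2d f hmax hreg
      (Finset.univ.filter (fun j : Fin d => (j : ℕ) < k1))
      (fun j hj => by simp only [Finset.mem_filter, Finset.mem_univ, true_and] at hj; omega)
      b hb2 (by simp only [Finset.mem_filter, Finset.mem_univ, true_and]; omega)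
      x (by rwa [hcoe])
    rwa [hcoe] at this
  have he : ∀ (s : Finset (chartIdx d k1 k2 b)) (a : chartIdx d k1 k2 b), a ∉ s →
      ∀ x : R, f a.1 * x ∈ Ideal.span (f '' Stmt7Aux.US (b := b) s) →
        x ∈ Ideal.span (f '' Stmt7Aux.US (b := b) s) := by
    intro s a ha x hx
    set t : Finset (Fin d) :=
      (Finset.univ.filter (fun j : Fin d => (j : ℕ) < k1) ∪ {b}) ∪ s.image Subtype.val
      with htdef
    have hcoe : (↑t : Set (Fin d)) = Stmt7Aux.US (b := b) s := by
      ext j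
      simp [htdef, Stmt7Aux.US]
      tauto
    have ht : ∀ j ∈ t, (j : ℕ) < k2 := by
      intro j hj
      simp only [htdef, Finset.mem_union, Finset.mem_filter, Finset.mem_univ, true_and,
        Finset.mem_singleton, Finset.mem_image] at hj
      rcases hj with (hj | rfl) | ⟨c, _, rfl⟩
      · omega
      · exact hb2
      · exact c.2.2.1
    have hct : a.1 ∉ t := by
      simp only [htdef, Finset.mem_union, Finset.mem_filter, Finset.mem_univ, true_and,
        Finset.mem_singleton, Finset.mem_image]
      push_neg
      refine ⟨⟨by omega, ?_⟩, ?_⟩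
      · intro h; exact a.2.2.2 (by exact_mod_cast Fin.ext (by exact_mod_cast congrArg Fin.val h))
      · intro c hc hval
        exact absurd (Subtype.ext hval ▸ hc) ha
    have := Stmt7Aux.regSub h2d f hmax hreg t ht a.1 a.2.2.1 hct x (by rwa [hcoe])
    rwa [hcoe] at this
  have main := Stmt7Aux.mainInd f hg he (Finset.univ : Finset (chartIdx d k1 k2 b))
  have hrel : relIdeal R d k1 k2 f b =
      Ideal.span (Stmt7Aux.rl (d := d) (k1 := k1) (k2 := k2) (b := b) f ''
        ↑(Finset.univ : Finset (chartIdx d k1 k2 b))) := by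
    rw [Finset.coe_univ, Set.image_univ]
    rfl
  have onestep : ∀ y : BlChart R d k1 k2 f b,
      chartMap R d k1 k2 f b (f b) * y ∈
        (Ideal.span (f '' {j : Fin d | (j : ℕ) < k1})).map (chartMap R d k1 k2 f b) →
      y ∈ (Ideal.span (f '' {j : Fin d | (j : ℕ) < k1})).map (chartMap R d k1 k2 f b) := by
    intro y hy
    obtain ⟨p, rfl⟩ := Ideal.Quotient.mk_surjective y
    have hmapeq : (Ideal.span (f '' {j : Fin d | (j : ℕ) < k1})).map
        (chartMap R d k1 k2 f b) =
        ((Ideal.span (f '' {j : Fin d | (j : ℕ) < k1})).map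
          (C : R →+* MvPolynomial (chartIdx d k1 k2 b) R)).map
            (Ideal.Quotient.mk (relIdeal R d k1 k2 f b)) :=
      (Ideal.map_map _ _).symm
    rw [hmapeq] at hy ⊢
    have hy2 : (Ideal.Quotient.mk (relIdeal R d k1 k2 f b)) (C (f b) * p) ∈
        ((Ideal.span (f '' {j : Fin d | (j : ℕ) < k1})).map
          (C : R →+* MvPolynomial (chartIdx d k1 k2 b) R)).map
            (Ideal.Quotient.mk (relIdeal R d k1 k2 f b)) := by
      rw [map_mul]; exact hy
    rw [Ideal.mem_quotient_iff_mem_sup, hrel] at hy2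
    have := main p hy2
    rw [Ideal.mem_quotient_iff_mem_sup, hrel]
    exact this
  intro x m
  induction m generalizing x with
  | zero => intro hx; rwa [pow_zero, one_mul] at hx
  | succ m ihm =>
    intro hx
    have h1 : chartMap R d k1 k2 f b (f b) ^ m * (chartMap R d k1 k2 f b (f b) * x) ∈
        (Ideal.span (f '' {j : Fin d | (j : ℕ) < k1})).map (chartMap R d k1 k2 f b) := by
      rw [← mul_assoc, ← pow_succ]; exact hx
    exact onestep x (ihm _ h1)
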